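/- Let m ≥ 1, zⱼ = r₀ ωⱼ with ωⱼ = (cos(π(j-1)/m), sin(π(j-1)/m), 0) ∈ ℝ³, r₀ > 0, j = 1, …, 2m, and α = -∑_{k=2}^{2m} (-1)ᵏ/(4π|z_k - z₁|). Define the 2m×2m matrix A by A_{jj} = α, A_{jj'} = -1/(4π|zⱼ - z_{j'}|) for j ≠ j'. Then the vector q with qⱼ = (-1)^{j+1} satisfies A q = 0. -/

import Mathlib

open Real

/-- The point (a, b, c) of Euclidean 3-space. -/
noncomputable def pt3 (a b c : ℝ) : EuclideanSpace ℝ (Fin 3) :=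
  (WithLp.equiv 2 (Fin 3 → ℝ)).symm ![a, b, c]

private lemma negpow_eq (a b : ℕ) (h : a % 2 = b % 2) : (-1:ℝ)^a = (-1:ℝ)^b := by
  conv_lhs => rw [← Nat.div_add_mod a 2]
  conv_rhs => rw [← Nat.div_add_mod b 2]
  rw [pow_add, pow_add, pow_mul, pow_mul]
  norm_num [h]

open Fin.NatCast in
/-- for the regular 2m-gon scatterer with
α = -∑_{k=2}^{2m}(-1)ᵏ/(4π|z_k - z₁|), the alternating charge vector
q_j = (-1)^{j+1} lies in the kernel of the zero-energy matrix A.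
Here the paper's vertex z_j (j = 1,…,2m) is `z (j-1)`, i.e. `z i` has angle πi/m,
and the paper's q_j = (-1)^{j+1} is `q i = (-1)^i` for i = j - 1. -/
theorem stmt12 (m : ℕ) (hm : 1 ≤ m) (r₀ : ℝ) (hr : 0 < r₀)
    (z : ℕ → EuclideanSpace ℝ (Fin 3))
    (hz : ∀ i : ℕ, z i = pt3 (r₀ * cos (π * i / m)) (r₀ * sin (π * i / m)) 0)
    (α : ℝ)
    (hα : α = -∑ k ∈ Finset.Icc 2 (2 * m), ((-1 : ℝ)) ^ k / (4 * π * ‖z (k - 1) - z 0‖))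
    (A : Matrix (Fin (2 * m)) (Fin (2 * m)) ℝ)
    (hA : ∀ j j' : Fin (2 * m),
      A j j' = if j = j' then α else -1 / (4 * π * ‖z j.val - z j'.val‖))
    (q : Fin (2 * m) → ℝ) (hq : ∀ j : Fin (2 * m), q j = (-1 : ℝ) ^ j.val) :
    A.mulVec q = 0 := by
  haveI : NeZero (2 * m) := ⟨by omega⟩
  have hmR : (0:ℝ) < (m:ℝ) := by exact_mod_cast hm
  -- the distance formula
  have hnorm : ∀ a b : ℕ, ‖z a - z b‖ = 2 * r₀ * |sin (π * ((a:ℝ) - b) / (2 * m))| := by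
    intro a b
    rw [hz a, hz b, EuclideanSpace.norm_eq]
    have hsub : ∀ i : Fin 3, (pt3 (r₀ * cos (π * a / m)) (r₀ * sin (π * a / m)) 0 -
        pt3 (r₀ * cos (π * b / m)) (r₀ * sin (π * b / m)) 0) i
        = ![r₀ * cos (π * a / m) - r₀ * cos (π * b / m),
            r₀ * sin (π * a / m) - r₀ * sin (π * b / m), 0] i := by
      intro i
      fin_cases i <;> simp [pt3]
    simp only [hsub]
    rw [Fin.sum_univ_three]
    simp only [Matrix.cons_val_zero, Matrix.cons_val_one, Matrix.head_cons,
      Matrix.cons_val_two, Matrix.tail_cons, Real.norm_eq_abs, sq_abs]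
    have key : (r₀ * cos (π * a / m) - r₀ * cos (π * b / m))^2 +
        (r₀ * sin (π * a / m) - r₀ * sin (π * b / m))^2 + 0^2
        = (2 * r₀ * sin (π * ((a:ℝ) - b) / (2 * m)))^2 := by
      have h1 := Real.sin_sq_eq_half_sub (π * ((a:ℝ) - b) / (2 * m))
      have h2 : 2 * (π * ((a:ℝ) - b) / (2 * m)) = π * a / m - π * b / m := by
        field_simp
      rw [h2, Real.cos_sub] at h1
      linear_combination (-(4*r₀^2)) * h1 + r₀^2 * sin_sq_add_cos_sq (π * a / m)
        + r₀^2 * sin_sq_add_cos_sq (π * b / m)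
    rw [key, Real.sqrt_sq_eq_abs, abs_mul, abs_of_nonneg (by positivity : (0:ℝ) ≤ 2 * r₀)]
  funext j
  simp only [Matrix.mulVec, dotProduct, Pi.zero_apply]
  rw [← Finset.add_sum_erase _ _ (Finset.mem_univ j), hA j j, if_pos rfl, hq j]
  have hsum : ∑ j' ∈ Finset.univ.erase j, A j j' * q j'
      = ∑ k ∈ Finset.Icc 2 (2*m), (-1:ℝ)^j.val * ((-1:ℝ)^k / (4*π*‖z (k-1) - z 0‖)) := by
    refine Finset.sum_nbij' (fun j' => (j' - j).val + 1)
      (fun k => j + ((k - 1 : ℕ) : Fin (2*m))) ?_ ?_ ?_ ?_ ?_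
    · intro j' hj'
      have h1 : j' - j ≠ 0 := sub_ne_zero.mpr (Finset.ne_of_mem_erase hj')
      have h2 : (j' - j).val ≠ 0 := by
        intro h; exact h1 (Fin.ext (by simp [h]))
      have h3 := (j' - j).isLt
      simp only [Finset.mem_Icc]; omega
    · intro k hk
      simp only [Finset.mem_Icc] at hk
      refine Finset.mem_erase.mpr ⟨?_, Finset.mem_univ _⟩
      intro h
      have h0 : ((k - 1 : ℕ) : Fin (2*m)) = 0 := add_eq_left.mp h
      have h1 : (((k - 1 : ℕ) : Fin (2*m))).val = k - 1 := Fin.val_cast_of_lt (by omega)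
      rw [h0] at h1
      simp only [Fin.val_zero] at h1
      omega
    · intro j' hj'
      simp only [Nat.add_sub_cancel, Fin.cast_val_eq_self]
      rw [add_comm, sub_add_cancel]
    · intro k hk
      simp only [Finset.mem_Icc] at hk
      show ((j + ((k - 1 : ℕ) : Fin (2*m)) - j : Fin (2*m)) : ℕ) + 1 = k
      rw [add_sub_cancel_left, Fin.val_cast_of_lt (by omega)]
      omega
    · intro j' hj'
      rw [hA j j', if_neg (Finset.ne_of_mem_erase hj').symm, hq j']
      set t := (j' - j).val with ht
      have hj'eq : j' = j + (j' - j) := by rw [add_comm, sub_add_cancel]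
      have hval : j'.val = (j.val + t) % (2*m) := by
        conv_lhs => rw [hj'eq]
        rw [Fin.val_add]
      -- parity
      have hpar : (-1:ℝ)^j'.val = (-1:ℝ)^(j.val + t) := by
        refine negpow_eq _ _ ?_
        rw [hval, Nat.mod_mod_of_dvd _ ⟨m, rfl⟩]
      -- norm
      have hc : (2*m) * ((j.val + t) / (2*m)) + j'.val = j.val + t := by
        rw [hval]; exact Nat.div_add_mod _ _
      set c := (j.val + t) / (2*m) with hcdef
      have hnn : ‖z j.val - z j'.val‖ = ‖z t - z 0‖ := by
        rw [hnorm j.val j'.val, hnorm t 0]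
        simp only [Nat.cast_zero, sub_zero]
        have hre : (j.val : ℝ) - j'.val = 2*m*c - t := by
          have : ((2*m) * c + j'.val : ℝ) = j.val + t := by exact_mod_cast hc
          push_cast at this ⊢
          linarith
        have harg : π * ((j.val:ℝ) - j'.val) / (2*m) = -(π * (t:ℝ) / (2*m)) + (c:ℤ) * π := by
          rw [hre]
          push_cast
          field_simp
          ring
        rw [harg, Real.sin_add_int_mul_pi, Real.sin_neg, abs_mul]
        have : |((-1:ℝ))^(c:ℤ)| = 1 := by
          rw [zpow_natCast, abs_pow, abs_neg, abs_one, one_pow]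
        rw [this, one_mul, abs_neg]
      rw [hnn, hpar, Nat.add_sub_cancel, pow_add]
      ring
  rw [hsum, ← Finset.mul_sum, hα]
  ring
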